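/- Every irreducible G-subrepresentation M of ℂ[A] is the ℂ-linear span of a set Φ of characters of A; moreover, any two distinct irreducible G-subrepresentations of ℂ[A] are non-isomorphic (each isomorphism class of irreducible G-representation occurs in ℂ[A] with multiplicity at most one), and for each irreducible G-subrepresentation M of ℂ[A], the subspace of H-fixed vectors of M is one-dimensional. -/

import Mathlib

set_option linter.unusedSectionVars false


noncomputable section

variable {A : Type*} [CommGroup A] [Fintype A]

/-- The semidirect product `G = A ⋊ H`, for `H` a subgroup of `Aut(A)`. -/
abbrev Gsd (H : Subgroup (MulAut A)) : Type _ := A ⋊[H.subtype] H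

/-- The `G`-representation on `ℂ[A] = (A → ℂ)`: `a₀ ∈ A` acts by `(a₀·f)(x) = f(x·a₀)` and
`h ∈ H` acts by `(h·f)(x) = f(h⁻¹ x)`. -/
def rho (H : Subgroup (MulAut A)) (g : Gsd H) : (A → ℂ) →ₗ[ℂ] (A → ℂ) where
  toFun f := fun x => f (((g.right : MulAut A))⁻¹ (x * g.left))
  map_add' _ _ := rfl
  map_smul' _ _ := rfl

/-- `M` is a `G`-subrepresentation of `ℂ[A]`. -/
def IsSubrep (H : Subgroup (MulAut A)) (M : Submodule ℂ (A → ℂ)) : Prop :=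
  ∀ (g : Gsd H) (f : A → ℂ), f ∈ M → rho H g f ∈ M

/-- `M` is an irreducible `G`-subrepresentation of `ℂ[A]`. -/
def IsIrred (H : Subgroup (MulAut A)) (M : Submodule ℂ (A → ℂ)) : Prop :=
  M ≠ ⊥ ∧ ∀ N : Submodule ℂ (A → ℂ), N ≤ M → IsSubrep H N → N = ⊥ ∨ N = M

/-- A character `χ : A →* ℂ` regarded as an element of `ℂ[A] = (A → ℂ)`. -/
def charFun (χ : A →* ℂ) : A → ℂ := fun a => χ a

/-- `N` and `M` are isomorphic as `G`-representations: there is an injective `ℂ`-linear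
`G`-equivariant map defined on `N` with image `M`. -/
def SubrepIso (H : Subgroup (MulAut A)) (N M : Submodule ℂ (A → ℂ)) : Prop :=
  ∃ T : ↥N →ₗ[ℂ] (A → ℂ),
    Function.Injective T ∧ LinearMap.range T = M ∧
    ∀ (g : Gsd H) (m m' : ↥N),
      (m' : A → ℂ) = rho H g (m : A → ℂ) → T m' = rho H g (T m)

/-- The subspace of `H`-fixed vectors of `M`. -/
def fixedH (H : Subgroup (MulAut A)) (M : Submodule ℂ (A → ℂ)) :
    Submodule ℂ (A → ℂ) where
  carrier := {f | f ∈ M ∧ ∀ h : H, rho H (SemidirectProduct.inr h) f = f}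
  add_mem' := by
    rintro f g ⟨hf, hf2⟩ ⟨hg, hg2⟩
    exact ⟨M.add_mem hf hg, fun h => by rw [map_add, hf2 h, hg2 h]⟩
  zero_mem' := ⟨M.zero_mem, fun _ => map_zero _⟩
  smul_mem' := by
    rintro c f ⟨hf, hf2⟩
    exact ⟨M.smul_mem c hf, fun h => by rw [map_smul, hf2 h]⟩

lemma rho_apply (H : Subgroup (MulAut A)) (g : Gsd H) (f : A → ℂ) (x : A) :
    rho H g f x = f (((g.right : MulAut A))⁻¹ (x * g.left)) := rfl

lemma char_val_ne_zero (χ : A →* ℂ) (a : A) : χ a ≠ 0 := by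
  intro h
  have h1 : χ a * χ a⁻¹ = 1 := by rw [← map_mul, mul_inv_cancel, map_one]
  rw [h, zero_mul] at h1
  exact zero_ne_one h1

lemma charFun_ne_zero (χ : A →* ℂ) : charFun χ ≠ 0 := fun h => by
  have := congrFun h 1
  simp [charFun] at this

def hact (H : Subgroup (MulAut A)) (h : H) (χ : A →* ℂ) : A →* ℂ :=
  χ.comp (((h : MulAut A))⁻¹ : MulAut A).toMonoidHom

lemma hact_apply (H : Subgroup (MulAut A)) (h : H) (χ : A →* ℂ) (a : A) :
    hact H h χ a = χ (((h : MulAut A))⁻¹ a) := rfl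

lemma hact_mul (H : Subgroup (MulAut A)) (h h' : H) (χ : A →* ℂ) :
    hact H (h * h') χ = hact H h (hact H h' χ) := by
  ext a
  simp [hact_apply, mul_inv_rev]

lemma hact_inv_hact (H : Subgroup (MulAut A)) (h : H) (χ : A →* ℂ) :
    hact H h⁻¹ (hact H h χ) = χ := by
  ext a
  simp [hact_apply]

lemma hact_hact_inv (H : Subgroup (MulAut A)) (h : H) (χ : A →* ℂ) :
    hact H h (hact H h⁻¹ χ) = χ := by
  ext a
  simp [hact_apply]

lemma hact_one (H : Subgroup (MulAut A)) (χ : A →* ℂ) : hact H 1 χ = χ := by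
  ext a
  simp [hact_apply]

lemma rho_inl_charFun (H : Subgroup (MulAut A)) (a : A) (χ : A →* ℂ) :
    rho H (SemidirectProduct.inl a) (charFun χ) = χ a • charFun χ := by
  funext x
  simp [rho_apply, charFun, SemidirectProduct.left_inl, SemidirectProduct.right_inl,
    map_mul, mul_comm]

lemma rho_inr_charFun (H : Subgroup (MulAut A)) (h : H) (χ : A →* ℂ) :
    rho H (SemidirectProduct.inr h) (charFun χ) = charFun (hact H h χ) := by
  funext x
  simp [rho_apply, charFun, hact_apply, SemidirectProduct.left_inr, SemidirectProduct.right_inr]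

lemma rho_charFun (H : Subgroup (MulAut A)) (g : Gsd H) (χ : A →* ℂ) :
    rho H g (charFun χ) = χ (((g.right : MulAut A))⁻¹ g.left) • charFun (hact H g.right χ) := by
  funext x
  simp only [rho_apply, charFun, hact_apply, Pi.smul_apply, smul_eq_mul]
  rw [mul_comm x g.left, map_mul, map_mul]

lemma sum_char_eq_zero (ψ : A →* ℂ) (hψ : ψ ≠ 1) : ∑ a : A, ψ a = 0 := by
  obtain ⟨b, hb⟩ : ∃ b, ψ b ≠ 1 := by
    by_contra hb
    push_neg at hb
    exact hψ (MonoidHom.ext hb)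
  have key : ψ b * ∑ a : A, ψ a = ∑ a : A, ψ a := by
    rw [Finset.mul_sum]
    exact Fintype.sum_bijective (fun a => b * a) (Group.mulLeft_bijective b) _ _
      (fun a => (map_mul ψ b a).symm)
  have h2 : (ψ b - 1) * ∑ a : A, ψ a = 0 := by
    rw [sub_mul, one_mul, key, sub_self]
  rcases mul_eq_zero.1 h2 with h | h
  · exact absurd (sub_eq_zero.1 h) hb
  · exact h

def divChar (χ₀ χ : A →* ℂ) : A →* ℂ where
  toFun a := (χ₀ a)⁻¹ * χ a
  map_one' := by simp
  map_mul' x y := by simp only [map_mul, mul_inv]; ring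

lemma sum_conj_mul (χ₀ χ : A →* ℂ) :
    ∑ a : A, (χ₀ a)⁻¹ * χ a = if χ = χ₀ then (Fintype.card A : ℂ) else 0 := by
  by_cases h : χ = χ₀
  · subst h
    simp [inv_mul_cancel₀ (char_val_ne_zero χ _)]
  · rw [if_neg h]
    set ψ : A →* ℂ := divChar χ₀ χ with hψdef
    have hψne : ψ ≠ 1 := by
      intro h1
      apply h
      ext a
      have h2 : (χ₀ a)⁻¹ * χ a = 1 := by
        have := congrArg (fun φ : A →* ℂ => φ a) h1
        simpa [hψdef, divChar] using this
      have h3 : χ₀ a * ((χ₀ a)⁻¹ * χ a) = χ₀ a * 1 := by rw [h2]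
      rwa [← mul_assoc, mul_inv_cancel₀ (char_val_ne_zero _ _), one_mul, mul_one] at h3
    exact sum_char_eq_zero ψ hψne


lemma charFun_li : LinearIndependent ℂ (charFun (A := A)) :=
  linearIndependent_monoidHom A ℂ

def addCharToHom (ψ : AddChar (Additive A) ℂ) : A →* ℂ where
  toFun := fun a => ψ (Additive.ofMul a)
  map_one' := ψ.map_zero_eq_one
  map_mul' := fun x y => ψ.map_add_eq_mul x y

lemma span_charFun_top : Submodule.span ℂ (Set.range (charFun (A := A))) = ⊤ := by
  refine top_unique ?_
  intro f _
  have hf : f ∈ Submodule.span ℂ (Set.range ⇑(AddChar.complexBasis (Additive A))) :=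
    Module.Basis.mem_span _ f
  refine Submodule.span_le.2 ?_ hf
  rintro _ ⟨ψ, rfl⟩
  refine Submodule.subset_span ⟨addCharToHom ψ, ?_⟩
  rw [AddChar.complexBasis_apply]
  rfl

def charBasis : Module.Basis (A →* ℂ) ℂ (A → ℂ) :=
  Module.Basis.mk charFun_li (by rw [span_charFun_top])

instance : Fintype (A →* ℂ) := FiniteDimensional.fintypeBasisIndex charBasis

lemma charBasis_apply (χ : A →* ℂ) : charBasis χ = charFun χ := Module.Basis.mk_apply _ _ _

lemma exists_charFun_mem (H : Subgroup (MulAut A)) (M : Submodule ℂ (A → ℂ))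
    (hM : ∀ (g : Gsd H) (f : A → ℂ), f ∈ M → rho H g f ∈ M) (hne : M ≠ ⊥) :
    ∃ χ : A →* ℂ, charFun χ ∈ M := by
  obtain ⟨f, hfM, hf0⟩ := Submodule.exists_mem_ne_zero_of_ne_bot hne
  set c : (A →* ℂ) → ℂ := fun χ => charBasis.repr f χ with hc
  have hrep : ∑ χ : (A →* ℂ), c χ • charFun χ = f := by
    have := charBasis.sum_repr f
    simpa [charBasis_apply, hc] using this
  obtain ⟨χ₀, hc0⟩ : ∃ χ₀, c χ₀ ≠ 0 := by
    by_contra hcc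
    push_neg at hcc
    apply hf0
    rw [← hrep]
    simp [hcc]
  refine ⟨χ₀, ?_⟩
  have hvM : (∑ a : A, (χ₀ a)⁻¹ • rho H (SemidirectProduct.inl a) f) ∈ M :=
    Submodule.sum_mem _ fun a _ => Submodule.smul_mem _ _ (hM _ f hfM)
  have hstep : ∀ a : A, rho H (SemidirectProduct.inl a) f
      = ∑ χ : (A →* ℂ), (c χ * χ a) • charFun χ := by
    intro a
    conv_lhs => rw [← hrep]
    rw [map_sum]
    refine Finset.sum_congr rfl fun χ _ => ?_
    rw [map_smul, rho_inl_charFun, smul_smul]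
  have hv : (∑ a : A, (χ₀ a)⁻¹ • rho H (SemidirectProduct.inl a) f)
      = (c χ₀ * (Fintype.card A : ℂ)) • charFun χ₀ := by
    calc ∑ a : A, (χ₀ a)⁻¹ • rho H (SemidirectProduct.inl a) f
        = ∑ a : A, ∑ χ : (A →* ℂ), ((χ₀ a)⁻¹ * (c χ * χ a)) • charFun χ := by
          refine Finset.sum_congr rfl fun a _ => ?_
          rw [hstep a, Finset.smul_sum]
          exact Finset.sum_congr rfl fun χ _ => by rw [smul_smul]
      _ = ∑ χ : (A →* ℂ), (c χ * ∑ a : A, (χ₀ a)⁻¹ * χ a) • charFun χ := by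
          rw [Finset.sum_comm]
          refine Finset.sum_congr rfl fun χ _ => ?_
          rw [← Finset.sum_smul]
          congr 1
          rw [Finset.mul_sum]
          exact Finset.sum_congr rfl fun a _ => by ring
      _ = (c χ₀ * (Fintype.card A : ℂ)) • charFun χ₀ := by
          rw [Finset.sum_eq_single χ₀]
          · rw [sum_conj_mul, if_pos rfl]
          · intro χ _ hχ
            rw [sum_conj_mul, if_neg hχ, mul_zero, zero_smul]
          · intro habs
            exact absurd (Finset.mem_univ χ₀) habs
  rw [hv] at hvM
  have hne2 : (c χ₀ * (Fintype.card A : ℂ)) ≠ 0 := by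
    refine mul_ne_zero hc0 ?_
    exact_mod_cast Fintype.card_ne_zero
  have := Submodule.smul_mem M (c χ₀ * (Fintype.card A : ℂ))⁻¹ hvM
  rwa [smul_smul, inv_mul_cancel₀ hne2, one_smul] at this

lemma eigen_eq (H : Subgroup (MulAut A)) (χ : A →* ℂ) (v : A → ℂ)
    (hv : ∀ a : A, χ a • v = rho H (SemidirectProduct.inl a) v) :
    v = v 1 • charFun χ := by
  funext a
  have h1 := congrFun (hv a) 1
  simp only [Pi.smul_apply, smul_eq_mul, rho_apply, SemidirectProduct.left_inl,
    SemidirectProduct.right_inl, OneMemClass.coe_one, inv_one, MulAut.one_apply, one_mul] at h1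
  simp only [Pi.smul_apply, smul_eq_mul, charFun]
  rw [← h1]
  ring

lemma span_orbit (H : Subgroup (MulAut A)) (M : Submodule ℂ (A → ℂ))
    (hM : IsSubrep H M) (hMirr : IsIrred H M) :
    ∃ χ₀ : A →* ℂ, charFun χ₀ ∈ M ∧
      M = Submodule.span ℂ (charFun '' (Set.range fun h : H => hact H h χ₀)) := by
  obtain ⟨χ₀, hχ₀⟩ := exists_charFun_mem H M hM hMirr.1
  refine ⟨χ₀, hχ₀, ?_⟩
  set O : Set (A →* ℂ) := Set.range fun h : H => hact H h χ₀ with hO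
  set N := Submodule.span ℂ (charFun '' O) with hN
  have hNM : N ≤ M := by
    refine Submodule.span_le.2 ?_
    rintro _ ⟨_, ⟨h, rfl⟩, rfl⟩
    have := hM (SemidirectProduct.inr h) _ hχ₀
    rwa [rho_inr_charFun] at this
  have hNsub : IsSubrep H N := by
    intro g f hf
    have h2 : rho H g f ∈ Submodule.map (rho H g) N := ⟨f, hf, rfl⟩
    rw [hN, Submodule.map_span] at h2
    refine Submodule.span_le.2 ?_ h2
    rintro _ ⟨_, ⟨_, ⟨h, rfl⟩, rfl⟩, rfl⟩
    rw [rho_charFun]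
    refine Submodule.smul_mem _ _ (Submodule.subset_span ⟨_, ⟨g.right * h, ?_⟩, rfl⟩)
    show hact H (g.right * h) χ₀ = hact H g.right (hact H h χ₀)
    rw [hact_mul]
  have hN0 : N ≠ ⊥ := by
    intro hb
    have hmem : charFun χ₀ ∈ N := by
      refine Submodule.subset_span ⟨χ₀, ⟨1, ?_⟩, rfl⟩
      show hact H 1 χ₀ = χ₀
      rw [hact_one]
    rw [hb, Submodule.mem_bot] at hmem
    exact charFun_ne_zero χ₀ hmem
  rcases hMirr.2 N hNM hNsub with h | h
  · exact absurd h hN0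
  · exact h.symm

lemma fixed_one_dim (H : Subgroup (MulAut A)) (M : Submodule ℂ (A → ℂ)) (χ₀ : A →* ℂ)
    (hMeq : M = Submodule.span ℂ (charFun '' (Set.range fun h : H => hact H h χ₀))) :
    Module.finrank ℂ ↥(fixedH H M) = 1 := by
  classical
  set O : Set (A →* ℂ) := Set.range fun h : H => hact H h χ₀ with hO
  set O' : Finset (A →* ℂ) := (Set.toFinite O).toFinset with hO'
  have hmemO' : ∀ χ, χ ∈ O' ↔ χ ∈ O := fun χ => Set.Finite.mem_toFinset _
  have hχ₀O' : χ₀ ∈ O' := (hmemO' χ₀).2 ⟨1, hact_one H χ₀⟩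
  have hstable : ∀ (h : H), ∀ χ ∈ O', hact H h χ ∈ O' := by
    intro h χ hχ
    obtain ⟨h', hh'⟩ := (hmemO' χ).1 hχ
    refine (hmemO' _).2 ⟨h * h', ?_⟩
    show hact H (h * h') χ₀ = hact H h χ
    have hh2 : hact H h' χ₀ = χ := hh'
    rw [hact_mul, hh2]
  set σ : A → ℂ := ∑ χ ∈ O', charFun χ with hσ
  -- reindexing lemma
  have hreindex : ∀ (h : H) (d : (A →* ℂ) → ℂ),
      ∑ χ ∈ O', d χ • charFun (hact H h χ) = ∑ χ ∈ O', d (hact H h⁻¹ χ) • charFun χ := by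
    intro h d
    refine Finset.sum_nbij' (hact H h) (hact H h⁻¹) (hstable h) (hstable h⁻¹)
      (fun χ _ => hact_inv_hact H h χ) (fun χ _ => hact_hact_inv H h χ) ?_
    intro χ _
    rw [hact_inv_hact]
  have hσM : σ ∈ M := by
    rw [hMeq]
    exact Submodule.sum_mem _ fun χ hχ =>
      Submodule.subset_span ⟨χ, (hmemO' χ).1 hχ, rfl⟩
  have hσfix : ∀ h : H, rho H (SemidirectProduct.inr h) σ = σ := by
    intro h
    rw [hσ, map_sum]
    calc ∑ χ ∈ O', rho H (SemidirectProduct.inr h) (charFun χ)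
        = ∑ χ ∈ O', (1 : ℂ) • charFun (hact H h χ) := by
          refine Finset.sum_congr rfl fun χ _ => ?_
          rw [rho_inr_charFun, one_smul]
      _ = ∑ χ ∈ O', (1 : ℂ) • charFun χ := hreindex h _
      _ = ∑ χ ∈ O', charFun χ := by simp
  have hσ0 : σ ≠ 0 := by
    intro h0
    have hsum : ∑ χ ∈ O', (1 : ℂ) • charFun χ = 0 := by
      rw [← h0, hσ]; simp
    have := linearIndependent_iff'.1 charFun_li O' (fun _ => (1 : ℂ)) hsum χ₀ hχ₀O'
    exact one_ne_zero this
  have hfixed : fixedH H M = Submodule.span ℂ {σ} := by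
    refine le_antisymm ?_ ?_
    · rintro f ⟨hfM, hfix⟩
      -- expand f in characters over O'
      rw [hMeq] at hfM
      have himg : charFun '' O = ↑(O'.image charFun) := by
        rw [Finset.coe_image, Set.Finite.coe_toFinset]
      rw [himg] at hfM
      obtain ⟨e, -, he⟩ := Submodule.mem_span_finset.1 hfM
      rw [Finset.sum_image (fun χ _ ψ _ hh => charFun_li.injective hh)] at he
      set d : (A →* ℂ) → ℂ := fun χ => e (charFun χ) with hd
      have hconst : ∀ χ ∈ O', d χ = d χ₀ := by
        intro χ hχ
        obtain ⟨h, hh⟩ := (hmemO' χ).1 hχ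
        have hinv : ∀ ψ ∈ O', d (hact H h⁻¹ ψ) = d ψ := by
          intro ψ hψ
          have h1 := hfix h
          have h2 : ∑ ψ ∈ O', d ψ • charFun (hact H h ψ) = ∑ ψ ∈ O', d ψ • charFun ψ := by
            calc ∑ ψ ∈ O', d ψ • charFun (hact H h ψ)
                = rho H (SemidirectProduct.inr h) f := by
                  rw [← he, map_sum]
                  exact Finset.sum_congr rfl fun ψ _ => by rw [map_smul, rho_inr_charFun]
              _ = f := h1
              _ = ∑ ψ ∈ O', d ψ • charFun ψ := he.symm
          rw [hreindex h d] at h2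
          have h3 : ∑ ψ ∈ O', (d (hact H h⁻¹ ψ) - d ψ) • charFun ψ = 0 := by
            simp only [sub_smul, Finset.sum_sub_distrib, h2, sub_self]
          have := linearIndependent_iff'.1 charFun_li O' _ h3 ψ hψ
          exact sub_eq_zero.1 this
        have hback : hact H h⁻¹ χ = χ₀ := by rw [← hh, hact_inv_hact]
        have := hinv χ hχ
        rw [hback] at this
        exact this.symm
      have hfσ : f = d χ₀ • σ := by
        rw [← he, hσ, Finset.smul_sum]
        exact Finset.sum_congr rfl fun χ hχ => by rw [show e (charFun χ) = d χ from rfl, hconst χ hχ]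
      exact Submodule.mem_span_singleton.2 ⟨d χ₀, hfσ.symm⟩
    · rw [Submodule.span_singleton_le_iff_mem]
      exact ⟨hσM, hσfix⟩
  rw [hfixed]
  exact finrank_span_singleton hσ0

/-- Every irreducible `G`-subrepresentation `M` of `ℂ[A]` is the span of a set `Φ`
of characters of `A`; distinct irreducible `G`-subrepresentations of `ℂ[A]` are non-isomorphic
(each isomorphism class occurs with multiplicity at most one); and the space of `H`-fixed
vectors of `M` is one-dimensional. -/
theorem statement_0 (H : Subgroup (MulAut A)) (M : Submodule ℂ (A → ℂ))
    (hM : IsSubrep H M) (hMirr : IsIrred H M) :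
    (∃ Φ : Finset (A →* ℂ), M = Submodule.span ℂ (charFun '' ↑Φ)) ∧
    (∀ N : Submodule ℂ (A → ℂ), IsSubrep H N → IsIrred H N → N ≠ M →
      ¬ SubrepIso H N M) ∧
    Module.finrank ℂ ↥(fixedH H M) = 1 := by
  obtain ⟨χ₀, hχ₀M, hMeq⟩ := span_orbit H M hM hMirr
  refine ⟨?_, ?_, fixed_one_dim H M χ₀ hMeq⟩
  · refine ⟨(Set.toFinite (Set.range fun h : H => hact H h χ₀)).toFinset, ?_⟩
    rw [Set.Finite.coe_toFinset]
    exact hMeq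
  · rintro N hN hNirr hne ⟨T, hTinj, hTrange, hTequiv⟩
    have key : ∀ χ : A →* ℂ, charFun χ ∈ N → charFun χ ∈ M := by
      intro χ hχ
      set m : ↥N := ⟨charFun χ, hχ⟩ with hm
      have hvM : T m ∈ M := by rw [← hTrange]; exact ⟨m, rfl⟩
      have heig : ∀ a : A, χ a • T m = rho H (SemidirectProduct.inl a) (T m) := by
        intro a
        have h1 : ((χ a • m : ↥N) : A → ℂ) = rho H (SemidirectProduct.inl a) (m : A → ℂ) := by
          show χ a • charFun χ = rho H (SemidirectProduct.inl a) (charFun χ)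
          rw [rho_inl_charFun]
        have h2 := hTequiv (SemidirectProduct.inl a) m (χ a • m) h1
        rw [map_smul] at h2
        exact h2
      have hvne : T m ≠ 0 := by
        intro h0
        have hm0 : m = 0 := hTinj (by rw [h0, map_zero])
        have hcz : charFun χ = 0 := congrArg Subtype.val hm0
        exact charFun_ne_zero χ hcz
      have hv1 : T m = (T m) 1 • charFun χ := eigen_eq H χ (T m) heig
      set c := T m 1 with hc
      have hcne : c ≠ 0 := fun h => hvne (by rw [hv1, h, zero_smul])
      have heq : c⁻¹ • T m = charFun χ := by
        rw [hv1, smul_smul, inv_mul_cancel₀ hcne, one_smul]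
      rw [← heq]
      exact M.smul_mem _ hvM
    obtain ⟨ψ₀, hψ₀N, hNeq⟩ := span_orbit H N hN hNirr
    have hNM : N ≤ M := by
      conv_lhs => rw [hNeq]
      refine Submodule.span_le.2 ?_
      rintro _ ⟨ψ, hψO, rfl⟩
      refine key ψ ?_
      rw [hNeq]
      exact Submodule.subset_span ⟨ψ, hψO, rfl⟩
    rcases hMirr.2 N hNM hN with h | h
    · exact hNirr.1 h
    · exact hne h
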